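/- If ρ is a pseudo-run of length L in a VASS V weakly satisfying a generalized unboundedness property P of length K, then there exists a genuine run (all configurations in ℕⁿ) satisfying P whose length is at most ((L · pic(V))^K) · (1 + K² · L · pic(V)) + L, where pic(V) is the maximal absolute value of the negative entries of transition vectors of V. -/

import Mathlib

/-- Membership of an integer `d` in an interval given by optional lower bound
`lo` (`none` = `-∞`) and optional upper bound `hi` (`none` = `+∞`). -/
def MemI (lo hi : Option ℤ) (d : ℤ) : Prop :=
  (∀ u, lo = some u → u ≤ d) ∧ (∀ v, hi = some v → d ≤ v)

/-- Flattened path of the first `r` segments of a decomposed pseudo-run, where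
segment `s` consists of the connector path `σ s` followed by the loop `π s`. -/
def pre {n : ℕ} (σ π : ℕ → List (Fin n → ℤ)) (r : ℕ) : List (Fin n → ℤ) :=
  ((List.range r).map fun s => σ s ++ π s).flatten

/-- The pseudo-configuration `x_{2r+1}` (just before loop `π r`). -/
def aConf {n : ℕ} (c₀ : Fin n → ℤ) (σ π : ℕ → List (Fin n → ℤ)) (r : ℕ) :
    Fin n → ℤ :=
  c₀ + (pre σ π r ++ σ r).sum

/-- The pseudo-configuration `x_{2r+2}` (just after loop `π r`). -/
def bConf {n : ℕ} (c₀ : Fin n → ℤ) (σ π : ℕ → List (Fin n → ℤ)) (r : ℕ) :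
    Fin n → ℤ :=
  c₀ + (pre σ π (r + 1)).sum

/-- The pseudo-configuration at offset `i` inside segment `r`. -/
def conf {n : ℕ} (c₀ : Fin n → ℤ) (σ π : ℕ → List (Fin n → ℤ)) (r i : ℕ) :
    Fin n → ℤ :=
  c₀ + (pre σ π r ++ (σ r ++ π r).take i).sum

/-- The approximation property `A[P, l, INCR, I, +∞]` for a decomposed
pseudo-run with `M + 1` loop segments (segments reindexed from `0`), for the
generalized unboundedness property `P` given by interval bounds `lo`, `hi`:
(transitions in `T`); (P1') the effect of each loop `π r` lies in the
corresponding intervals; (P2') a negative effect on component `j` at stage `r`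
implies `j ∈ INCR` or an earlier stage with positive effect on `j`;
(P3') with bound `+∞`: every pseudo-configuration strictly before the end of
segment `r` is nonnegative on every `j ∈ I` with `j ∉ INCR` and with no
earlier stage of positive effect on `j`. -/
def SatA {n : ℕ} (T : Finset (Fin n → ℤ)) (M : ℕ) (INCR I : Finset (Fin n))
    (lo hi : ℕ → Fin n → Option ℤ) (c₀ : Fin n → ℤ)
    (σ π : ℕ → List (Fin n → ℤ)) : Prop :=
  (∀ r ≤ M, ∀ t ∈ σ r ++ π r, t ∈ T) ∧
  (∀ r ≤ M, ∀ j, MemI (lo r j) (hi r j) (bConf c₀ σ π r j - aConf c₀ σ π r j)) ∧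
  (∀ r ≤ M, ∀ j, bConf c₀ σ π r j - aConf c₀ σ π r j < 0 →
      j ∈ INCR ∨ ∃ r' < r, 0 < bConf c₀ σ π r' j - aConf c₀ σ π r' j) ∧
  (∀ r ≤ M, ∀ i < (σ r ++ π r).length, ∀ j ∈ I, j ∉ INCR →
      (∀ r' < r, ¬ 0 < bConf c₀ σ π r' j - aConf c₀ σ π r' j) →
      0 ≤ conf c₀ σ π r i j)

/-- Weak satisfaction of a generalized unboundedness property `P` (given by
interval bounds `lo`, `hi`) by a decomposed pseudo-run with `M + 1` loop
segments: (transitions in `T`); (P1) the effect of loop `π r` lies in the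
corresponding intervals; (P2) a negative effect on `j` at stage `r` implies an
earlier stage with positive effect on `j`; (P3) every pseudo-configuration with
a negative `j`-th entry occurs after some stage with positive effect on `j`. -/
def WeakSat {n : ℕ} (T : Finset (Fin n → ℤ)) (M : ℕ)
    (lo hi : ℕ → Fin n → Option ℤ) (c₀ : Fin n → ℤ)
    (σ π : ℕ → List (Fin n → ℤ)) : Prop :=
  (∀ r ≤ M, ∀ t ∈ σ r ++ π r, t ∈ T) ∧
  (∀ r ≤ M, ∀ j, MemI (lo r j) (hi r j) (bConf c₀ σ π r j - aConf c₀ σ π r j)) ∧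
  (∀ r ≤ M, ∀ j, bConf c₀ σ π r j - aConf c₀ σ π r j < 0 →
      ∃ r' < r, 0 < bConf c₀ σ π r' j - aConf c₀ σ π r' j) ∧
  (∀ r ≤ M, ∀ i < (σ r ++ π r).length, ∀ j, conf c₀ σ π r i j < 0 →
      ∃ r' < r, 0 < bConf c₀ σ π r' j - aConf c₀ σ π r' j)

/-- `pic(T)`: the maximal absolute value of the negative entries of the
transition vectors of `T`. -/
def picT {n : ℕ} (T : Finset (Fin n → ℤ)) : ℕ :=
  T.sup fun t => Finset.univ.sup fun j => (-(t j)).toNat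

/-- A decomposed genuine run (all configurations in `ℕⁿ`) satisfying the
generalized unboundedness property given by `lo`, `hi`: transitions in `T`,
(P1), (P2), and every configuration along the run is nonnegative. -/
def RunSatP {n : ℕ} (T : Finset (Fin n → ℤ)) (M : ℕ)
    (lo hi : ℕ → Fin n → Option ℤ) (c₀ : Fin n → ℤ)
    (σ π : ℕ → List (Fin n → ℤ)) : Prop :=
  (∀ r ≤ M, ∀ t ∈ σ r ++ π r, t ∈ T) ∧
  (∀ r ≤ M, ∀ j, MemI (lo r j) (hi r j) (bConf c₀ σ π r j - aConf c₀ σ π r j)) ∧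
  (∀ r ≤ M, ∀ j, bConf c₀ σ π r j - aConf c₀ σ π r j < 0 →
      ∃ r' < r, 0 < bConf c₀ σ π r' j - aConf c₀ σ π r' j) ∧
  (∀ r ≤ M, ∀ i ≤ (σ r ++ π r).length, ∀ j, 0 ≤ conf c₀ σ π r i j)

namespace GUaux
open List Finset

variable {n : ℕ}

theorem pre_zero (σ π : ℕ → List (Fin n → ℤ)) : pre σ π 0 = [] := by simp [pre]

theorem pre_succ (σ π : ℕ → List (Fin n → ℤ)) (r : ℕ) :
    pre σ π (r + 1) = pre σ π r ++ (σ r ++ π r) := by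
  simp [pre, List.range_succ]

theorem pre_split (σ π : ℕ → List (Fin n → ℤ)) {a b : ℕ} (h : a ≤ b) :
    ∃ tail, pre σ π b = pre σ π a ++ tail := by
  induction b with
  | zero => obtain rfl : a = 0 := Nat.le_zero.mp h; exact ⟨[], by simp⟩
  | succ b ih =>
    rcases Nat.lt_or_ge a (b + 1) with hlt | hge
    · obtain ⟨t, ht⟩ := ih (Nat.lt_succ_iff.mp hlt)
      exact ⟨t ++ (σ b ++ π b), by rw [pre_succ, ht, List.append_assoc]⟩
    · obtain rfl : a = b + 1 := le_antisymm h hge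
      exact ⟨[], by simp⟩

theorem length_pre (σ π : ℕ → List (Fin n → ℤ)) (R : ℕ) :
    (pre σ π R).length = ∑ s ∈ Finset.range R, (σ s ++ π s).length := by
  induction R with
  | zero => simp [pre]
  | succ R ih => rw [pre_succ, List.length_append, ih, Finset.sum_range_succ]

theorem sum_pre_succ (σ π : ℕ → List (Fin n → ℤ)) (r : ℕ) :
    (pre σ π (r + 1)).sum = (pre σ π r).sum + ((σ r).sum + (π r).sum) := by
  rw [pre_succ, List.sum_append, List.sum_append]

theorem effect (c₀ : Fin n → ℤ) (σ π : ℕ → List (Fin n → ℤ)) (r : ℕ) (j : Fin n) :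
    bConf c₀ σ π r j - aConf c₀ σ π r j = (π r).sum j := by
  simp [bConf, aConf, sum_pre_succ, List.sum_append, Pi.add_apply]

theorem conf_apply (c₀ : Fin n → ℤ) (σ π : ℕ → List (Fin n → ℤ)) (r i : ℕ) (j : Fin n) :
    conf c₀ σ π r i j = c₀ j + ((pre σ π r).sum j + (((σ r ++ π r).take i).sum j)) := by
  simp [conf, List.sum_append, Pi.add_apply]

theorem aConf_eq_conf (c₀ : Fin n → ℤ) (σ π : ℕ → List (Fin n → ℤ)) (r : ℕ) :
    aConf c₀ σ π r = conf c₀ σ π r (σ r).length := by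
  have : (σ r ++ π r).take (σ r).length = σ r := by
    rw [List.take_append_of_le_length le_rfl, List.take_length]
  rw [aConf, conf, this]

theorem bConf_apply (c₀ : Fin n → ℤ) (σ π : ℕ → List (Fin n → ℤ)) (r : ℕ) (j : Fin n) :
    bConf c₀ σ π r j = aConf c₀ σ π r j + (π r).sum j := by
  have := effect c₀ σ π r j; omega

theorem conf_take (c₀ : Fin n → ℤ) (σ π : ℕ → List (Fin n → ℤ)) {r i R : ℕ}
    (h1 : r < R) (h2 : i ≤ (σ r ++ π r).length) :
    conf c₀ σ π r i = c₀ + ((pre σ π R).take ((pre σ π r).length + i)).sum := by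
  obtain ⟨tail, ht⟩ := pre_split σ π (show r + 1 ≤ R from h1)
  rw [ht, pre_succ, List.append_assoc]
  rw [List.take_append]
  have h3 : (pre σ π r).take ((pre σ π r).length + i) = pre σ π r :=
    List.take_of_length_le (by omega)
  have h4 : ((σ r ++ π r) ++ tail).take ((pre σ π r).length + i - (pre σ π r).length)
      = (σ r ++ π r).take i := by
    rw [Nat.add_sub_cancel_left, List.take_append_of_le_length h2]
  rw [h3, h4, conf]

theorem len_repl (l : List (Fin n → ℤ)) (K : ℕ) :
    ((List.replicate K l).flatten).length = K * l.length := by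
  simp [List.length_flatten, List.map_replicate, List.sum_replicate, smul_eq_mul]

theorem sum_repl (l : List (Fin n → ℤ)) (K : ℕ) :
    ((List.replicate K l).flatten).sum = K • l.sum := by
  simp [List.sum_flatten, List.map_replicate, List.sum_replicate]

theorem mem_repl {l : List (Fin n → ℤ)} {K : ℕ} {t : Fin n → ℤ}
    (h : t ∈ (List.replicate K l).flatten) : t ∈ l := by
  rw [List.mem_flatten] at h
  obtain ⟨l', hl', ht⟩ := h
  rwa [List.eq_of_mem_replicate hl'] at ht

theorem take_repl (l : List (Fin n → ℤ)) {K k m : ℕ} (hk : k < K) (hm : m ≤ l.length) :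
    (((List.replicate K l).flatten).take (k * l.length + m)).sum
      = k • l.sum + (l.take m).sum := by
  induction K generalizing k with
  | zero => omega
  | succ K ih =>
    rw [List.replicate_succ, List.flatten_cons]
    cases k with
    | zero => simp [List.take_append_of_le_length hm]
    | succ k =>
      have h1 : (k + 1) * l.length + m = l.length + (k * l.length + m) := by ring
      rw [h1, List.take_append, List.take_of_length_le (by omega),
        Nat.add_sub_cancel_left, List.sum_append, ih (by omega)]
      rw [succ_nsmul]
      abel

theorem picT_step {T : Finset (Fin n → ℤ)} {t : Fin n → ℤ} (ht : t ∈ T) (j : Fin n) :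
    -(picT T : ℤ) ≤ t j := by
  have h1 : (-(t j)).toNat ≤ picT T :=
    le_trans (Finset.le_sup (f := fun j => (-(t j)).toNat) (Finset.mem_univ j))
      (Finset.le_sup (f := fun t => Finset.univ.sup fun j => (-(t j)).toNat) ht)
  have h2 := Int.self_le_toNat (-(t j))
  have h3 : ((-(t j)).toNat : ℤ) ≤ (picT T : ℤ) := by exact_mod_cast h1
  omega

theorem sum_ge (T : Finset (Fin n → ℤ)) (w : List (Fin n → ℤ))
    (hw : ∀ t ∈ w, t ∈ T) (j : Fin n) :
    -((picT T : ℤ) * w.length) ≤ w.sum j := by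
  induction w with
  | nil => simp
  | cons t w ih =>
    have h1 := picT_step (hw t (List.mem_cons_self)) j
    have h2 := ih (fun t' ht' => hw t' (List.mem_cons_of_mem _ ht'))
    simp only [List.sum_cons, Pi.add_apply, List.length_cons]
    push_cast
    linarith

theorem choose_add (A a k : ℕ) :
    A.choose (k + 1) + a * A.choose k ≤ (A + a).choose (k + 1) := by
  induction a with
  | zero => simp
  | succ a ih =>
    have h1 : A + (a + 1) = (A + a) + 1 := rfl
    rw [h1, Nat.choose_succ_succ]
    have h2 : A.choose k ≤ (A + a).choose k := Nat.choose_le_choose k (Nat.le_add_right A a)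
    have h3 : (A + a).choose (k+1) ≥ A.choose (k+1) + a * A.choose k := ih
    nlinarith

theorem prod_le_sum_choose (m : ℕ) (a : ℕ → ℕ) :
    ∏ u ∈ Finset.range m, (1 + a u)
      ≤ ∑ k ∈ Finset.range (m + 1), (∑ u ∈ Finset.range m, a u).choose k := by
  induction m with
  | zero => simp
  | succ m ih =>
    rw [Finset.prod_range_succ, Finset.sum_range_succ (f := a)]
    set A := ∑ u ∈ Finset.range m, a u with hA
    set am := a m
    calc (∏ u ∈ Finset.range m, (1 + a u)) * (1 + am)
        ≤ (∑ k ∈ Finset.range (m + 1), A.choose k) * (1 + am) :=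
          Nat.mul_le_mul_right _ ih
      _ ≤ ∑ k ∈ Finset.range (m + 2), (A + am).choose k := ?_
    have e1 : ∑ k ∈ Finset.range (m + 2), (A + am).choose k
        = ∑ k ∈ Finset.range (m + 1), (A + am).choose (k + 1) + 1 := by
      rw [Finset.sum_range_succ' (fun k => (A + am).choose k) (m + 1)]
      simp
    have e2 : ∑ k ∈ Finset.range (m + 1), (A.choose (k + 1) + am * A.choose k)
        ≤ ∑ k ∈ Finset.range (m + 1), (A + am).choose (k + 1) :=
      Finset.sum_le_sum fun k _ => choose_add A am k
    have e3 : ∑ k ∈ Finset.range (m + 1), (A.choose (k + 1) + am * A.choose k)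
        = ∑ k ∈ Finset.range (m + 1), A.choose (k + 1)
          + am * ∑ k ∈ Finset.range (m + 1), A.choose k := by
      rw [Finset.sum_add_distrib, Finset.mul_sum]
    have e4 : ∑ k ∈ Finset.range (m + 1), A.choose k
        ≤ ∑ k ∈ Finset.range (m + 1), A.choose (k + 1) + 1 := by
      rw [Finset.sum_range_succ' (fun k => A.choose k) m]
      have : ∑ k ∈ Finset.range m, A.choose (k + 1)
          ≤ ∑ k ∈ Finset.range (m + 1), A.choose (k + 1) := by
        apply Finset.sum_le_sum_of_subset
        exact Finset.range_subset_range.mpr (by omega)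
      simp only [Nat.choose_zero_right]
      omega
    nlinarith







theorem take_app_exact (l₁ l₂ : List (Fin n → ℤ)) (m : ℕ) :
    (l₁ ++ l₂).take (l₁.length + m) = l₁ ++ l₂.take m := by
  rw [List.take_append, List.take_of_length_le (by omega),
    Nat.add_sub_cancel_left]

theorem decomp (σ π : ℕ → List (Fin n → ℤ)) (R : ℕ) :
    ∀ m < (pre σ π R).length,
      ∃ r < R, ∃ i < (σ r ++ π r).length, m = (pre σ π r).length + i := by
  induction R with
  | zero => intro m hm; simp [pre] at hm
  | succ R ih =>
    intro m hm
    rw [pre_succ, List.length_append] at hm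
    rcases Nat.lt_or_ge m (pre σ π R).length with h | h
    · obtain ⟨r, hr, hrest⟩ := ih m h
      exact ⟨r, by omega, hrest⟩
    · exact ⟨R, by omega, m - (pre σ π R).length, by omega, by omega⟩

theorem pre_stall (σ π : ℕ → List (Fin n → ℤ)) (a d : ℕ)
    (h : ∀ s, a ≤ s → s < a + d → σ s = [] ∧ π s = []) :
    pre σ π (a + d) = pre σ π a := by
  induction d with
  | zero => rfl
  | succ d ih =>
    have h1 := h (a + d) (by omega) (by omega)
    rw [show a + (d+1) = (a+d)+1 from rfl, pre_succ, h1.1, h1.2]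
    simp [ih (fun s h1 h2 => h s h1 (by omega))]

/-- the "all remaining loops are trivial" predicate -/
def badP (π : ℕ → List (Fin n → ℤ)) (M r : ℕ) : Prop :=
  ∀ u, r ≤ u → u ≤ M → π u = []

theorem badP_mono {π : ℕ → List (Fin n → ℤ)} {M r r' : ℕ} (h : badP π M r)
    (hrr : r ≤ r') : badP π M r' := fun u h1 h2 => h u (by omega) h2

theorem badP_top (π : ℕ → List (Fin n → ℤ)) (M : ℕ) : badP π M (M + 1) :=
  fun _ h1 h2 => absurd h1 (by omega)

/-- projected remaining lengths -/
def Gf (π : ℕ → List (Fin n → ℤ)) (p L M r : ℕ) : ℕ :=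
  L * ∏ u ∈ Finset.Ico r M, (1 + p * (π u).length)

def Nf (π : ℕ → List (Fin n → ℤ)) (p L M u : ℕ) : ℕ := p * Gf π p L M (u + 1)

theorem Gf_step (π : ℕ → List (Fin n → ℤ)) (p L : ℕ) {r M : ℕ} (h : r < M) :
    Gf π p L M r = Gf π p L M (r + 1) + Nf π p L M r * (π r).length := by
  rw [Gf, Finset.prod_eq_prod_Ico_succ_bot h, Nf, Gf]
  ring

theorem Gf_sum (π : ℕ → List (Fin n → ℤ)) (p L M : ℕ) :
    ∀ r ≤ M, Gf π p L M r = L + ∑ u ∈ Finset.Ico r M, Nf π p L M u * (π u).length := by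
  suffices h : ∀ d r, r + d = M →
      Gf π p L M r = L + ∑ u ∈ Finset.Ico r M, Nf π p L M u * (π u).length by
    intro r hr; exact h (M - r) r (by omega)
  intro d
  induction d with
  | zero =>
    intro r hr
    obtain rfl : r = M := by omega
    simp [Gf]
  | succ d ih =>
    intro r hr
    have hrM : r < M := by omega
    rw [Gf_step π p L hrM, ih (r+1) (by omega), Finset.sum_eq_sum_Ico_succ_bot hrM]
    ring

/-- the block of pumped copies of `π (r-1)` inserted at the start of stage `r` -/
def blockL (π : ℕ → List (Fin n → ℤ)) (p L M r : ℕ) : List (Fin n → ℤ) :=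
  (List.replicate (if r = 0 then 0 else Nf π p L M (r - 1)) (π (r - 1))).flatten

open Classical in
/-- the modified connectors -/
noncomputable def sig' (σ π : ℕ → List (Fin n → ℤ)) (p L M r : ℕ) :
    List (Fin n → ℤ) :=
  if badP π M r then [] else blockL π p L M r ++ σ r

end GUaux

/-- If `ρ` is a pseudo-run of length `L` weakly satisfying a
generalized unboundedness property `P` of length `K = M + 1` (given by interval
bounds `lo`, `hi`), starting from a genuine initial configuration `c₀ ∈ ℕⁿ`,
then there exists a genuine run from `c₀` (all configurations in `ℕⁿ`)
satisfying `P`, whose length is at most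
`((L · pic(T))^K) · (1 + K² · L · pic(T)) + L`. -/
theorem pseudo_run_to_run (n M : ℕ) (T : Finset (Fin n → ℤ))
    (lo hi : ℕ → Fin n → Option ℤ) (c₀ : Fin n → ℤ)
    (σ π : ℕ → List (Fin n → ℤ))
    (hc₀ : ∀ j, 0 ≤ c₀ j)
    (h : WeakSat T M lo hi c₀ σ π) :
    ∃ σ' π' : ℕ → List (Fin n → ℤ),
      RunSatP T M lo hi c₀ σ' π' ∧
      (pre σ' π' (M + 1)).length ≤
        ((pre σ π (M + 1)).length * picT T) ^ (M + 1) *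
          (1 + (M + 1) ^ 2 * (pre σ π (M + 1)).length * picT T) +
        (pre σ π (M + 1)).length := by
  classical
  obtain ⟨hT, hP1, hP2, hP3⟩ := h
  set p := picT T with hp
  set L := (pre σ π (M + 1)).length with hLdef
  obtain ⟨N, hNdef⟩ : ∃ N : ℕ → ℕ, N = GUaux.Nf π p L M := ⟨_, rfl⟩
  obtain ⟨bad, hbaddef⟩ : ∃ bad : ℕ → Prop, bad = GUaux.badP π M := ⟨_, rfl⟩
  obtain ⟨blk, hblkdef⟩ : ∃ blk : ℕ → List (Fin n → ℤ), blk = GUaux.blockL π p L M := ⟨_, rfl⟩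
  obtain ⟨σ', hσ'def⟩ : ∃ σ' : ℕ → List (Fin n → ℤ), σ' = GUaux.sig' σ π p L M := ⟨_, rfl⟩
  -- basic facts about the construction
  have hσ'bad : ∀ r, bad r → σ' r = [] := by
    intro r hb; rw [hbaddef] at hb; rw [hσ'def]; unfold GUaux.sig'; rw [if_pos hb]
  have hσ'good : ∀ r, ¬ bad r → σ' r = blk r ++ σ r := by
    intro r hb; rw [hbaddef] at hb
    rw [hσ'def, hblkdef]; unfold GUaux.sig'; rw [if_neg hb]
  have hblk0 : blk 0 = [] := by rw [hblkdef]; simp [GUaux.blockL]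
  have hblkS : ∀ s, blk (s + 1) = (List.replicate (N s) (π s)).flatten := by
    intro s; rw [hblkdef, hNdef]; simp [GUaux.blockL]
  have hbadmono : ∀ {a b : ℕ}, bad a → a ≤ b → bad b := by
    intro a b hb hab; rw [hbaddef] at hb ⊢; exact GUaux.badP_mono hb hab
  have hbadE : ∀ {r u : ℕ}, bad r → r ≤ u → u ≤ M → π u = [] := by
    intro r u hb h1 h2; rw [hbaddef] at hb; exact hb u h1 h2
  -- facts about the original pseudo-run
  have hP2' : ∀ r, r ≤ M → ∀ j, (π r).sum j < 0 → ∃ r' < r, 0 < (π r').sum j := by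
    intro r hr j hneg
    obtain ⟨r', hr', hpos⟩ := hP2 r hr j (by rw [GUaux.effect c₀ σ π r j]; exact hneg)
    exact ⟨r', hr', by rwa [GUaux.effect c₀ σ π r' j] at hpos⟩
  have hO1 : ∀ r, r ≤ M → ∀ i, i < (σ r ++ π r).length → ∀ j,
      (∀ u, u < r → ¬ 0 < (π u).sum j) → 0 ≤ conf c₀ σ π r i j := by
    intro r hr i hii j hfr
    by_contra hneg
    obtain ⟨r', hr', hpos⟩ := hP3 r hr i hii j (by omega)
    exact hfr r' hr' (by rwa [GUaux.effect c₀ σ π r' j] at hpos)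
  have hfz : ∀ j r, r ≤ M + 1 → (∀ u, u < r → ¬ 0 < (π u).sum j) →
      ∀ s, s < r → (π s).sum j = 0 := by
    intro j r hr hfr s hs
    rcases lt_trichotomy ((π s).sum j) 0 with hlt | he | hgt
    · obtain ⟨u, hu, hpos⟩ := hP2' s (by omega) j hlt
      exact absurd hpos (hfr u (by omega))
    · exact he
    · exact absurd hgt (hfr s hs)
  have haConf : ∀ f, f ≤ M → π f ≠ [] → ∀ j, (∀ u, u < f → ¬ 0 < (π u).sum j) →
      0 ≤ aConf c₀ σ π f j := by
    intro f hf hπ j hfr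
    rw [GUaux.aConf_eq_conf]
    apply hO1 f hf _ _ j hfr
    rw [List.length_append]
    have := List.length_pos_iff.mpr hπ
    omega
  -- transitions
  have hT' : ∀ r, r ≤ M → ∀ t ∈ σ' r ++ π r, t ∈ T := by
    intro r hr t ht
    rcases List.mem_append.mp ht with h1 | h1
    · rcases em (bad r) with hb | hb
      · rw [hσ'bad r hb] at h1; simp at h1
      · rw [hσ'good r hb] at h1
        rcases List.mem_append.mp h1 with h2 | h2
        · cases r with
          | zero => rw [hblk0] at h2; simp at h2
          | succ s =>
            rw [hblkS s] at h2
            exact hT s (by omega) t (List.mem_append_right _ (GUaux.mem_repl h2))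
        · exact hT r hr t (List.mem_append_left _ h2)
    · exact hT r hr t (List.mem_append_right _ h1)
  have hWT : ∀ t ∈ pre σ' π (M + 1), t ∈ T := by
    intro t ht
    rw [pre, List.mem_flatten] at ht
    obtain ⟨l, hl, htl⟩ := ht
    rw [List.mem_map] at hl
    obtain ⟨s, hs, rfl⟩ := hl
    rw [List.mem_range] at hs
    exact hT' s (by omega) t htl
  -- sums of the new prefix agree with old one on "fresh" components
  have hblkzero : ∀ r j, (∀ u, u + 1 ≤ r → (π u).sum j = 0) → (blk r).sum j = 0 := by
    intro r j hz
    cases r with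
    | zero => rw [hblk0]; simp
    | succ s =>
      rw [hblkS s, GUaux.sum_repl, Pi.smul_apply, hz s (by omega)]
      simp
  have hpresum : ∀ r, (∀ s, s < r → ¬ bad s) → ∀ j,
      (∀ u, u + 1 < r → (π u).sum j = 0) →
      (pre σ' π r).sum j = (pre σ π r).sum j := by
    intro r
    induction r with
    | zero => intro _ j _; simp [pre]
    | succ r ih =>
      intro hnb j hz
      have h1 := GUaux.sum_pre_succ σ' π r
      have h2 := GUaux.sum_pre_succ σ π r
      have h3 : (σ' r).sum j = (σ r).sum j := by
        rw [hσ'good r (hnb r (by omega)), List.sum_append, Pi.add_apply,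
          hblkzero r j (fun u hu => hz u (by omega))]
        simp
      have h5 := ih (fun s hs => hnb s (by omega)) j (fun u hu => hz u (by omega))
      calc (pre σ' π (r+1)).sum j = (pre σ' π r).sum j + ((σ' r).sum j + (π r).sum j) := by
            rw [h1]; simp [Pi.add_apply]
        _ = (pre σ π r).sum j + ((σ r).sum j + (π r).sum j) := by rw [h3, h5]
        _ = (pre σ π (r+1)).sum j := by rw [h2]; simp [Pi.add_apply]
  -- nonnegativity of new-run configurations at "fresh" positions
  have hfreshval : ∀ r, r ≤ M → ∀ i, i < (σ' r ++ π r).length → ∀ j,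
      (∀ u, u < r → ¬ 0 < (π u).sum j) → 0 ≤ conf c₀ σ' π r i j := by
    intro r hr i hii j hfr
    have hnb : ¬ bad r := by
      intro hb
      have he1 : π r = [] := hbadE hb le_rfl hr
      rw [hσ'bad r hb, he1] at hii
      simp at hii
    have hnball : ∀ s, s < r → ¬ bad s := fun s hs hb => hnb (hbadmono hb (by omega))
    have hzr : ∀ u, u < r → (π u).sum j = 0 := hfz j r (by omega) hfr
    rw [GUaux.conf_apply, hpresum r hnball j (fun u hu => hzr u (by omega))]
    rw [hσ'good r hnb, List.append_assoc]
    rcases Nat.lt_or_ge i (blk r).length with hib | hib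
    · -- inside the inserted block
      cases r with
      | zero => rw [hblk0] at hib; simp at hib
      | succ s =>
        rw [hblkS s] at hib ⊢
        rw [GUaux.len_repl] at hib
        rw [List.take_append_of_le_length (by rw [GUaux.len_repl]; omega)]
        have hℓ : 0 < (π s).length := by
          rcases Nat.eq_zero_or_pos (π s).length with h0 | h0
          · rw [h0, Nat.mul_zero] at hib; omega
          · exact h0
        have hk : i / (π s).length < N s := (Nat.div_lt_iff_lt_mul hℓ).mpr hib
        have hmod : i % (π s).length < (π s).length := Nat.mod_lt _ hℓ
        rw [show i = (i / (π s).length) * (π s).length + i % (π s).length from by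
          rw [Nat.mul_comm]; exact (Nat.div_add_mod i _).symm]
        rw [GUaux.take_repl (π s) hk (le_of_lt hmod)]
        have hold := hO1 s (by omega) ((σ s).length + i % (π s).length)
          (by rw [List.length_append]; omega) j (fun u hu => hfr u (by omega))
        rw [GUaux.conf_apply, GUaux.take_app_exact, List.sum_append] at hold
        have hδ0 : (π s).sum j = 0 := hzr s (by omega)
        have hpb := GUaux.sum_pre_succ σ π s
        simp only [Pi.add_apply, Pi.smul_apply, hpb, List.sum_append, hδ0, smul_zero,
          add_zero, zero_add] at hold ⊢
        linarith
    · -- after the inserted block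
      have hii2 : i - (blk r).length < (σ r ++ π r).length := by
        rw [hσ'good r hnb] at hii
        simp only [List.length_append] at hii ⊢
        omega
      rw [show i = (blk r).length + (i - (blk r).length) from by omega,
        GUaux.take_app_exact, List.sum_append]
      have hbz : (blk r).sum j = 0 := hblkzero r j (fun u hu => hzr u (by omega))
      have hold := hO1 r hr (i - (blk r).length) hii2 j hfr
      rw [GUaux.conf_apply] at hold
      simp only [Pi.add_apply, hbz, zero_add] at hold ⊢
      linarith
  -- length bookkeeping
  have hlenpre' := GUaux.length_pre σ' π
  have hlenpre := GUaux.length_pre σ π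
  have hΛmono : ∀ a b, a ≤ b → (pre σ' π a).length ≤ (pre σ' π b).length := by
    intro a b hab
    obtain ⟨t, ht⟩ := GUaux.pre_split σ' π hab
    rw [ht, List.length_append]; omega
  have hsegbound : ∀ s, s ≤ M → (σ' s ++ π s).length ≤ (blk s).length + (σ s ++ π s).length := by
    intro s hs
    rcases em (bad s) with hb | hb
    · rw [hσ'bad s hb, hbadE hb le_rfl hs]; simp
    · rw [hσ'good s hb]
      simp only [List.length_append]
      omega
  have hblklenS : ∀ s, (blk (s+1)).length = N s * (π s).length := by
    intro s; rw [hblkS, GUaux.len_repl]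
  have hWlen : (pre σ' π (M+1)).length ≤ GUaux.Gf π p L M 0 := by
    rw [hlenpre']
    calc ∑ s ∈ Finset.range (M+1), (σ' s ++ π s).length
        ≤ ∑ s ∈ Finset.range (M+1), ((blk s).length + (σ s ++ π s).length) :=
          Finset.sum_le_sum (fun s hs => hsegbound s (by
            have := Finset.mem_range.mp hs; omega))
      _ = ∑ s ∈ Finset.range (M+1), (blk s).length + L := by
          rw [Finset.sum_add_distrib, hLdef, hlenpre (M+1)]
      _ = ∑ u ∈ Finset.range M, N u * (π u).length + L := by
          congr 1
          rw [Finset.sum_range_succ' (fun s => (blk s).length) M]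
          simp only [hblklenS, hblk0]
          simp
      _ = GUaux.Gf π p L M 0 := by
          rw [GUaux.Gf_sum π p L M 0 (Nat.zero_le M), ← hNdef, Finset.range_eq_Ico]
          omega
  -- the key nonnegativity property for every prefix of the new run
  have hkey : ∀ m, m ≤ (pre σ' π (M+1)).length → ∀ j,
      0 ≤ c₀ j + ((pre σ' π (M+1)).take m).sum j := by
    intro m hm j
    by_cases hex : ∃ f, 0 < (π f).sum j ∧ f ≤ M
    · -- there is a stage with positive effect on j
      obtain ⟨f₀, hf₀pos, hf₀M⟩ := hex
      have hexf : ∃ f, 0 < (π f).sum j := ⟨f₀, hf₀pos⟩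
      obtain ⟨f, hfpos, hfmin, hfM⟩ :
          ∃ f, 0 < (π f).sum j ∧ (∀ u, u < f → ¬ 0 < (π u).sum j) ∧ f ≤ M :=
        ⟨Nat.find hexf, Nat.find_spec hexf, fun u hu => Nat.find_min hexf hu,
          le_trans (Nat.find_min' hexf hf₀pos) hf₀M⟩
      have hπf : π f ≠ [] := by intro he; rw [he] at hfpos; simp at hfpos
      have hzf : ∀ u, u < f → (π u).sum j = 0 := hfz j f (by omega) hfmin
      have hbCf : 1 ≤ bConf c₀ σ π f j := by
        rw [GUaux.bConf_apply]
        have := haConf f hfM hπf j hfmin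
        omega
      have hnbf : ∀ s, s < f + 1 → ¬ bad s := by
        intro s hs hb
        exact hπf (hbadE hb (by omega) hfM)
      have hpres : (pre σ' π (f+1)).sum j = (pre σ π (f+1)).sum j :=
        hpresum (f+1) hnbf j (fun u hu => hzf u (by omega))
      have hpreB : c₀ j + (pre σ' π (f+1)).sum j = bConf c₀ σ π f j := by
        rw [hpres]; simp [bConf, Pi.add_apply]
      rcases Nat.lt_or_ge m ((pre σ' π (f+1)).length) with hmf | hmf
      · -- position strictly before stage f+1 : fresh analysis
        have hmlt : m < (pre σ' π (M+1)).length := lt_of_lt_of_le hmf (hΛmono _ _ (by omega))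
        obtain ⟨r, hrR, i, hii, rfl⟩ := GUaux.decomp σ' π (M+1) m hmlt
        have hrf : r ≤ f := by
          by_contra hc
          have h6 : (pre σ' π (f+1)).length ≤ (pre σ' π r).length := hΛmono _ _ (by omega)
          omega
        have h0 := hfreshval r (by omega) i hii j (fun u hu => hfmin u (by omega))
        rw [GUaux.conf_take c₀ σ' π (show r < M+1 by omega) (le_of_lt hii),
          Pi.add_apply] at h0
        exact h0
      · rcases em (bad (f+1)) with hbf1 | hbf1
        · -- nothing after stage f : the position is the final one
          have hWf : pre σ' π (M+1) = pre σ' π (f+1) := by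
            have hst := GUaux.pre_stall σ' π (f+1) (M - f) ?_
            · rw [show f + 1 + (M - f) = M + 1 from by omega] at hst; exact hst
            · intro s hs1 hs2
              have hbs : bad s := hbadmono hbf1 hs1
              exact ⟨hσ'bad s hbs, hbadE hbs le_rfl (by omega)⟩
          have hmeq : m = (pre σ' π (f+1)).length := by rw [hWf] at hm; omega
          rw [hWf, hmeq, List.take_length]
          omega
        · -- interesting case : pumped block exists
          have hf1M : f + 1 ≤ M := by
            rw [hbaddef] at hbf1
            unfold GUaux.badP at hbf1
            push_neg at hbf1
            obtain ⟨u, h1, h2, _⟩ := hbf1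
            omega
          have hσ'f1 : σ' (f+1) = blk (f+1) ++ σ (f+1) := hσ'good (f+1) hbf1
          set m₁ := (pre σ' π (f+1)).length + (blk (f+1)).length with hm₁
          have hsplit : ∀ i2, i2 ≤ (blk (f+1)).length →
              (pre σ' π (M+1)).take ((pre σ' π (f+1)).length + i2)
                = pre σ' π (f+1) ++ (blk (f+1)).take i2 := by
            intro i2 hi2
            obtain ⟨tail, htail⟩ := GUaux.pre_split σ' π (show f+1+1 ≤ M+1 from by omega)
            rw [htail, GUaux.pre_succ σ' π (f+1), List.append_assoc, GUaux.take_app_exact]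
            congr 1
            rw [List.take_append_of_le_length (l₁ := σ' (f+1) ++ π (f+1)) (by
              rw [List.length_append, hσ'f1, List.length_append]; omega)]
            rw [hσ'f1, List.append_assoc, List.take_append_of_le_length hi2]
          rcases Nat.lt_or_ge m m₁ with hmb | hmb
          · -- inside the pumped block
            have him : m = (pre σ' π (f+1)).length + (m - (pre σ' π (f+1)).length) := by omega
            set i := m - (pre σ' π (f+1)).length with hidef
            have hib : i < (blk (f+1)).length := by omega
            rw [him, hsplit i (le_of_lt hib), List.sum_append, Pi.add_apply]
            rw [hblkS] at hib ⊢
            rw [GUaux.len_repl] at hib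
            have hℓ : 0 < (π f).length := by
              rcases Nat.eq_zero_or_pos (π f).length with h0 | h0
              · rw [h0, Nat.mul_zero] at hib; omega
              · exact h0
            have hk : i / (π f).length < N f := (Nat.div_lt_iff_lt_mul hℓ).mpr hib
            have hmod : i % (π f).length < (π f).length := Nat.mod_lt _ hℓ
            rw [show i = (i / (π f).length) * (π f).length + i % (π f).length from by
              rw [Nat.mul_comm]; exact (Nat.div_add_mod i _).symm]
            rw [GUaux.take_repl (π f) hk (le_of_lt hmod)]
            have hold := hO1 f hfM ((σ f).length + i % (π f).length)
              (by rw [List.length_append]; omega) j hfmin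
            rw [GUaux.conf_apply, GUaux.take_app_exact, List.sum_append] at hold
            have hpb := GUaux.sum_pre_succ σ π f
            rw [hpres]
            simp only [Pi.add_apply, Pi.smul_apply, hpb, List.sum_append] at hold ⊢
            have hks : (0:ℤ) ≤ (i / (π f).length : ℕ) • (π f).sum j := by
              rw [nsmul_eq_mul]
              exact mul_nonneg (by positivity) (le_of_lt hfpos)
            linarith
          · -- after the pumped block : use the boost
            have hv₁ : ((pre σ' π (M+1)).take m₁).sum j
                = (pre σ' π (f+1)).sum j + (N f : ℤ) * (π f).sum j := by
              rw [hm₁, hsplit _ le_rfl, List.take_length, List.sum_append, Pi.add_apply,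
                hblkS, GUaux.sum_repl, Pi.smul_apply, nsmul_eq_mul]
            rw [show m = m₁ + (m - m₁) from by omega, List.take_add, List.sum_append,
              Pi.add_apply, hv₁]
            set w := ((pre σ' π (M+1)).drop m₁).take (m - m₁) with hwdef
            have hwT : ∀ t ∈ w, t ∈ T := fun t ht =>
              hWT t (List.mem_of_mem_drop (List.mem_of_mem_take ht))
            have hwlen : w.length ≤ (pre σ' π (M+1)).length - m₁ := by
              rw [hwdef]
              simp only [List.length_take, List.length_drop]
              omega
            have hG := GUaux.sum_ge T w hwT j
            rw [← hp] at hG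
            -- length bound
            have hlenb : (pre σ' π (M+1)).length ≤ m₁ + GUaux.Gf π p L M (f+1) := by
              rw [hm₁, hblklenS, hlenpre' (M+1), hlenpre' (f+1)]
              have hsplitsum : ∑ s ∈ Finset.range (M+1), (σ' s ++ π s).length
                  = ∑ s ∈ Finset.range (f+1), (σ' s ++ π s).length
                    + ∑ s ∈ Finset.Ico (f+1) (M+1), (σ' s ++ π s).length := by
                simp only [Finset.range_eq_Ico]
                exact (Finset.sum_Ico_consecutive _ (Nat.zero_le _) (by omega)).symm
              rw [hsplitsum]
              have htail2 : ∑ s ∈ Finset.Ico (f+1) (M+1), (σ' s ++ π s).length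
                  ≤ N f * (π f).length + GUaux.Gf π p L M (f+1) := by
                have e0 : ∑ s ∈ Finset.Ico (f+1) (M+1), (σ' s ++ π s).length
                    ≤ ∑ s ∈ Finset.Ico (f+1) (M+1), ((blk s).length + (σ s ++ π s).length) :=
                  Finset.sum_le_sum (fun s hs => hsegbound s (by
                    have := Finset.mem_Ico.mp hs; omega))
                have e1 : ∑ s ∈ Finset.Ico (f+1) (M+1), ((blk s).length + (σ s ++ π s).length)
                    = ∑ s ∈ Finset.Ico (f+1) (M+1), (blk s).length
                      + ∑ s ∈ Finset.Ico (f+1) (M+1), (σ s ++ π s).length :=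
                  Finset.sum_add_distrib
                have e2 : ∑ s ∈ Finset.Ico (f+1) (M+1), (σ s ++ π s).length ≤ L := by
                  rw [hLdef, hlenpre (M+1), Finset.range_eq_Ico]
                  apply Finset.sum_le_sum_of_subset
                  intro x hx
                  simp only [Finset.mem_Ico] at *
                  omega
                have e3 : ∑ s ∈ Finset.Ico (f+1) (M+1), (blk s).length
                    = N f * (π f).length + ∑ u ∈ Finset.Ico (f+1) M, N u * (π u).length := by
                  rw [Finset.sum_Ico_eq_sum_range]
                  have e4 : ∀ k, (blk (f+1+k)).length = N (f+k) * (π (f+k)).length := by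
                    intro k
                    rw [show f+1+k = (f+k)+1 from by omega, hblklenS]
                  simp only [e4]
                  rw [show M + 1 - (f+1) = M - f from by omega,
                    ← Finset.sum_Ico_eq_sum_range (fun u => N u * (π u).length) f M,
                    Finset.sum_eq_sum_Ico_succ_bot (show f < M from by omega)]
                have e5 : GUaux.Gf π p L M (f+1)
                    = L + ∑ u ∈ Finset.Ico (f+1) M, N u * (π u).length := by
                  rw [GUaux.Gf_sum π p L M (f+1) hf1M, ← hNdef]
                omega
              omega
            -- final arithmetic
            have h1 : (1:ℤ) ≤ c₀ j + (pre σ' π (f+1)).sum j := by rw [hpreB]; exact hbCf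
            have h2 : (N f : ℤ) ≤ (N f : ℤ) * (π f).sum j :=
              le_mul_of_one_le_right (by positivity) (by exact_mod_cast hfpos)
            have h3 : (p:ℤ) * w.length ≤ (N f : ℤ) := by
              have h4 : p * w.length ≤ N f := by
                calc p * w.length ≤ p * ((pre σ' π (M+1)).length - m₁) :=
                      Nat.mul_le_mul_left _ hwlen
                  _ ≤ p * GUaux.Gf π p L M (f+1) := Nat.mul_le_mul_left _ (by omega)
                  _ = N f := by rw [hNdef]; rfl
              exact_mod_cast h4
            linarith
    · -- no stage has positive effect on j : everything is fresh
      push_neg at hex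
      have hfr : ∀ u, u ≤ M → ¬ 0 < (π u).sum j := fun u hu hpos => by
        have := hex u hpos; omega
      rcases Nat.lt_or_ge m (pre σ' π (M+1)).length with hmlt | hmge
      · obtain ⟨r, hrR, i, hii, rfl⟩ := GUaux.decomp σ' π (M+1) m hmlt
        have h0 := hfreshval r (by omega) i hii j (fun u hu => hfr u (by omega))
        rw [GUaux.conf_take c₀ σ' π (show r < M + 1 from by omega) (le_of_lt hii),
          Pi.add_apply] at h0
        exact h0
      · have hmeq : m = (pre σ' π (M+1)).length := by omega
        rw [hmeq, List.take_length]
        have hbex : ∃ r, bad r := ⟨M+1, by rw [hbaddef]; exact GUaux.badP_top π M⟩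
        obtain ⟨r₀, hb₀, hminb, hr₀M⟩ :
            ∃ r₀, bad r₀ ∧ (∀ s, s < r₀ → ¬ bad s) ∧ r₀ ≤ M + 1 :=
          ⟨Nat.find hbex, Nat.find_spec hbex, fun s hs => Nat.find_min hbex hs,
            Nat.find_min' hbex (by rw [hbaddef]; exact GUaux.badP_top π M)⟩
        have hstall : pre σ' π (M+1) = pre σ' π r₀ := by
          have hst := GUaux.pre_stall σ' π r₀ (M + 1 - r₀) ?_
          · rw [show r₀ + (M + 1 - r₀) = M + 1 from by omega] at hst; exact hst
          · intro s h1 h2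
            have hbs : bad s := hbadmono hb₀ h1
            exact ⟨hσ'bad s hbs, hbadE hbs le_rfl (by omega)⟩
        rw [hstall]
        have hzz : ∀ u, u + 1 < r₀ → (π u).sum j = 0 := fun u hu =>
          hfz j (M+1) le_rfl (fun u' hu' => hfr u' (by omega)) u (by omega)
        rw [hpresum r₀ hminb j hzz]
        rcases Nat.eq_zero_or_pos r₀ with h0 | h0
        · rw [h0, GUaux.pre_zero]
          simpa using hc₀ j
        · have hq : r₀ = (r₀ - 1) + 1 := by omega
          set q := r₀ - 1 with hqdef
          have hnbq : ¬ bad q := hminb q (by omega)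
          rw [hbaddef] at hnbq
          unfold GUaux.badP at hnbq
          push_neg at hnbq
          obtain ⟨u, hu1, hu2, hu3⟩ := hnbq
          have huq : u = q := by
            by_contra hne
            exact hu3 (hbadE hb₀ (by omega) hu2)
          have hπq : π q ≠ [] := huq ▸ hu3
          have hqM : q ≤ M := huq ▸ hu2
          have hfrq : ∀ u', u' < q → ¬ 0 < (π u').sum j := fun u' hu' => hfr u' (by omega)
          have hδq : (π q).sum j = 0 := hfz j (M+1) le_rfl (fun u' hu' => hfr u' (by omega)) q (by omega)
          have ha := haConf q hqM hπq j hfrq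
          rw [hq, GUaux.sum_pre_succ]
          simp only [aConf, List.sum_append, Pi.add_apply] at ha ⊢
          omega
  -- the four components of RunSatP
  have hRun2 : ∀ r, r ≤ M → ∀ j, MemI (lo r j) (hi r j)
      (bConf c₀ σ' π r j - aConf c₀ σ' π r j) := by
    intro r hr j
    rw [GUaux.effect c₀ σ' π r j]
    have h1 := hP1 r hr j
    rwa [GUaux.effect c₀ σ π r j] at h1
  have hRun3 : ∀ r, r ≤ M → ∀ j, bConf c₀ σ' π r j - aConf c₀ σ' π r j < 0 →
      ∃ r' < r, 0 < bConf c₀ σ' π r' j - aConf c₀ σ' π r' j := by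
    intro r hr j hneg
    rw [GUaux.effect c₀ σ' π r j] at hneg
    obtain ⟨r', hr', hpos⟩ := hP2' r hr j hneg
    exact ⟨r', hr', by rw [GUaux.effect c₀ σ' π r' j]; exact hpos⟩
  have hRun4 : ∀ r, r ≤ M → ∀ i, i ≤ (σ' r ++ π r).length → ∀ j,
      0 ≤ conf c₀ σ' π r i j := by
    intro r hr i hii j
    rw [GUaux.conf_take c₀ σ' π (show r < M + 1 from by omega) hii, Pi.add_apply]
    apply hkey
    have h1 : (pre σ' π r).length + i ≤ (pre σ' π (r+1)).length := by
      rw [GUaux.pre_succ, List.length_append]; omega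
    exact le_trans h1 (hΛmono _ _ (by omega))
  -- the length bound
  have hfinal : (pre σ' π (M+1)).length ≤
      (L * p) ^ (M + 1) * (1 + (M + 1) ^ 2 * L * p) + L := by
    have hsumℓ : ∑ u ∈ Finset.range M, (π u).length ≤ L := by
      rw [hLdef, hlenpre (M+1)]
      calc ∑ u ∈ Finset.range M, (π u).length
          ≤ ∑ u ∈ Finset.range (M+1), (π u).length :=
            Finset.sum_le_sum_of_subset (Finset.range_subset_range.mpr (by omega))
        _ ≤ ∑ u ∈ Finset.range (M+1), (σ u ++ π u).length :=
            Finset.sum_le_sum (fun u _ => by rw [List.length_append]; omega)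
    have hA : ∑ u ∈ Finset.range M, p * (π u).length ≤ L * p := by
      rw [← Finset.mul_sum]
      calc p * ∑ u ∈ Finset.range M, (π u).length ≤ p * L :=
            Nat.mul_le_mul_left _ hsumℓ
        _ = L * p := Nat.mul_comm _ _
    have h2 : GUaux.Gf π p L M 0 ≤ L * ∑ k ∈ Finset.range (M+1), (L*p).choose k := by
      unfold GUaux.Gf
      rw [show Finset.Ico 0 M = Finset.range M from (Finset.range_eq_Ico M).symm]
      apply Nat.mul_le_mul_left
      calc ∏ u ∈ Finset.range M, (1 + p * (π u).length)
          ≤ ∑ k ∈ Finset.range (M+1), (∑ u ∈ Finset.range M, p * (π u).length).choose k :=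
            GUaux.prod_le_sum_choose M _
        _ ≤ ∑ k ∈ Finset.range (M+1), (L*p).choose k :=
            Finset.sum_le_sum (fun k _ => Nat.choose_le_choose k hA)
    rcases Nat.eq_zero_or_pos (L * p) with hB | hB
    · have h3 : ∑ k ∈ Finset.range (M+1), (L*p).choose k = 1 := by
        rw [hB, Finset.sum_range_succ' (fun k => Nat.choose 0 k) M]
        simp [Nat.choose]
      have h4 : (pre σ' π (M+1)).length ≤ L := by
        have := le_trans hWlen h2
        rw [h3, Nat.mul_one] at this
        exact this
      omega
    · have h3 : ∑ k ∈ Finset.range (M+1), (L*p).choose k ≤ 1 + M * (L*p)^M := by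
        rw [Finset.sum_range_succ' (fun k => (L*p).choose k) M]
        have h5 : ∑ k ∈ Finset.range M, (L*p).choose (k+1) ≤ M * (L*p)^M := by
          calc ∑ k ∈ Finset.range M, (L*p).choose (k+1)
              ≤ ∑ _k ∈ Finset.range M, (L*p)^M := by
                apply Finset.sum_le_sum
                intro k hk
                have hkM : k + 1 ≤ M := by
                  have := Finset.mem_range.mp hk; omega
                calc (L*p).choose (k+1) ≤ (L*p)^(k+1) := Nat.choose_le_pow _ _
                  _ ≤ (L*p)^M := Nat.pow_le_pow_right hB hkM
            _ = M * (L*p)^M := by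
                rw [Finset.sum_const, Finset.card_range, smul_eq_mul]
        simp only [Nat.choose_zero_right]
        omega
      have h4 : (pre σ' π (M+1)).length ≤ L + L * (M * (L*p)^M) := by
        calc (pre σ' π (M+1)).length ≤ GUaux.Gf π p L M 0 := hWlen
          _ ≤ L * ∑ k ∈ Finset.range (M+1), (L*p).choose k := h2
          _ ≤ L * (1 + M * (L*p)^M) := Nat.mul_le_mul_left _ h3
          _ = L + L * (M * (L*p)^M) := by ring
      have hppos : 0 < p := by
        rcases Nat.eq_zero_or_pos p with h0 | h0
        · rw [h0, Nat.mul_zero] at hB; omega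
        · exact h0
      have h5 : L * (M * (L*p)^M) ≤ (L*p)^(M+1) * (1 + (M+1)^2 * L * p) := by
        have e1 : (L*p)^(M+1) = (L*p)^M * (L*p) := pow_succ _ _
        calc L * (M * (L*p)^M) = M * ((L*p)^M * L) := by ring
          _ ≤ M * ((L*p)^M * (L*p)) := by
              apply Nat.mul_le_mul_left
              apply Nat.mul_le_mul_left
              exact Nat.le_mul_of_pos_right L hppos
          _ = (L*p)^(M+1) * M := by rw [e1]; ring
          _ ≤ (L*p)^(M+1) * (1 + (M+1)^2 * (L*p)) := by
              apply Nat.mul_le_mul_left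
              nlinarith [hB]
          _ = (L*p)^(M+1) * (1 + (M+1)^2 * L * p) := by ring
      calc (pre σ' π (M+1)).length ≤ L + L * (M * (L*p)^M) := h4
        _ ≤ L + (L*p)^(M+1) * (1 + (M+1)^2 * L * p) := Nat.add_le_add_left h5 _
        _ = (L*p)^(M+1) * (1 + (M+1)^2 * L * p) + L := Nat.add_comm _ _
  exact ⟨σ', π, ⟨hT', hRun2, hRun3, hRun4⟩, hfinal⟩
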